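/- For a kei X and a ∈ X, the map h'_a = h_a + *_a∘h_a, where h_a appends a as the last coordinate and *_a applies *a to every coordinate, is a chain map from C_n^R(X) to C_{n+1}^R(X). -/
import Mathlib


/-- Delete the `i`-th coordinate of a tuple. -/
def delF {X : Type*} {n : ℕ} (i : Fin (n + 1)) (x : Fin (n + 1) → X) : Fin n → X :=
  fun j => x (i.succAbove j)

/-- Delete the `i`-th coordinate, acting by `* x_i` on the earlier coordinates. -/
def delS {X : Type*} (op : X → X → X) {n : ℕ} (i : Fin (n + 1)) (x : Fin (n + 1) → X) :
    Fin n → X :=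
  fun j => if (j : ℕ) < (i : ℕ) then op (x (Fin.castSucc j)) (x i) else x (i.succAbove j)

/-- The rack boundary of a generator (tuples indexed from 0; the paper's index `i ∈ {2,…,n}`
corresponds to `i ∈ {1,…,n}` here, with sign `(-1)^(i+1)`). -/
noncomputable def bdryGen {X : Type*} (op : X → X → X) {n : ℕ} (x : Fin (n + 1) → X) :
    (Fin n → X) →₀ ℤ :=
  ∑ i : Fin (n + 1), if (i : ℕ) = 0 then 0 else
    ((-1 : ℤ) ^ ((i : ℕ) + 1)) •
      (Finsupp.single (delF i x) 1 - Finsupp.single (delS op i x) 1)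

/-- The rack boundary map `∂ : C^R_{n+1}(X) → C^R_n(X)`. -/
noncomputable def bdry {X : Type*} (op : X → X → X) (n : ℕ) :
    ((Fin (n + 1) → X) →₀ ℤ) →ₗ[ℤ] ((Fin n → X) →₀ ℤ) :=
  Finsupp.lsum ℤ fun x => LinearMap.toSpanSingleton ℤ _ (bdryGen op x)

/-- The chain map `*_a`, applying `* a` to every coordinate. -/
noncomputable def starMap {X : Type*} (op : X → X → X) (a : X) (m : ℕ) :
    ((Fin m → X) →₀ ℤ) →ₗ[ℤ] ((Fin m → X) →₀ ℤ) :=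
  Finsupp.lsum ℤ fun x =>
    LinearMap.toSpanSingleton ℤ _ (Finsupp.single (fun j => op (x j) a) 1)

/-- The map `h_a`, appending `a` as the last coordinate. -/
noncomputable def hmap {X : Type*} (a : X) (m : ℕ) :
    ((Fin m → X) →₀ ℤ) →ₗ[ℤ] ((Fin (m + 1) → X) →₀ ℤ) :=
  Finsupp.lsum ℤ fun x => LinearMap.toSpanSingleton ℤ _ (Finsupp.single (Fin.snoc x a) 1)

section aux
variable {X : Type*} (op : X → X → X) (a : X) {n : ℕ}

lemma succAbove_castSucc_last (i : Fin (n + 1)) :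
    i.castSucc.succAbove (Fin.last n) = Fin.last (n + 1) := by
  have h : ¬ (Fin.last n).castSucc < i.castSucc := by
    simp only [Fin.lt_def, Fin.coe_castSucc, Fin.val_last, not_lt]
    omega
  rw [Fin.succAbove, if_neg h, Fin.succ_last]

lemma delF_snoc (i : Fin (n + 1)) (x : Fin (n + 1) → X) :
    delF i.castSucc (Fin.snoc x a) = Fin.snoc (delF i x) a := by
  funext j
  induction j using Fin.lastCases with
  | last => simp [delF, succAbove_castSucc_last]
  | cast j => simp [delF, Fin.castSucc_succAbove_castSucc]

lemma delS_snoc (i : Fin (n + 1)) (x : Fin (n + 1) → X) :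
    delS op i.castSucc (Fin.snoc x a) = Fin.snoc (delS op i x) a := by
  funext j
  induction j using Fin.lastCases with
  | last =>
      have hlt : ¬ ((Fin.last n : Fin (n+1)) : ℕ) < (i.castSucc : ℕ) := by
        simp only [Fin.val_last, Fin.coe_castSucc, not_lt]
        omega
      simp only [delS, if_neg hlt, succAbove_castSucc_last, Fin.snoc_last]
  | cast j =>
      by_cases hj : (j : ℕ) < (i : ℕ)
      · have hj' : ((j.castSucc : Fin (n+1)) : ℕ) < (i.castSucc : ℕ) := by
          simpa using hj
        simp only [delS, if_pos hj', if_pos hj, Fin.snoc_castSucc]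
      · have hj' : ¬ ((j.castSucc : Fin (n+1)) : ℕ) < (i.castSucc : ℕ) := by
          simpa using hj
        simp only [delS, if_neg hj', if_neg hj, Fin.snoc_castSucc,
          Fin.castSucc_succAbove_castSucc]

lemma delF_star (i : Fin (n + 1)) (y : Fin (n + 1) → X) :
    delF i (fun j => op (y j) a) = fun j => op (delF i y j) a := rfl

lemma delS_star (hdist : ∀ a b c : X, op (op a b) c = op (op a c) (op b c))
    (i : Fin (n + 1)) (y : Fin (n + 1) → X) :
    delS op i (fun j => op (y j) a) = fun j => op (delS op i y j) a := by
  funext j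
  by_cases hj : (j : ℕ) < (i : ℕ)
  · simp only [delS, if_pos hj]
    exact (hdist _ _ _).symm
  · simp only [delS, if_neg hj]

lemma delF_last_snoc (x : Fin (n + 1) → X) :
    delF (Fin.last (n + 1)) (Fin.snoc x a) = x := by
  funext j; simp [delF, Fin.succAbove_last]

lemma delS_last_snoc (x : Fin (n + 1) → X) :
    delS op (Fin.last (n + 1)) (Fin.snoc x a) = fun j => op (x j) a := by
  funext j
  have h : (j : ℕ) < ((Fin.last (n+1) : Fin (n+2)) : ℕ) := j.isLt
  simp only [delS, if_pos h, Fin.snoc_castSucc, Fin.snoc_last]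

lemma delS_last_star (hidem : ∀ x : X, op x x = x)
    (hinv : ∀ x b : X, op (op x b) b = x) (x : Fin (n + 1) → X) :
    delS op (Fin.last (n + 1)) (fun j => op ((Fin.snoc x a : Fin (n + 2) → X) j) a) = x := by
  funext j
  have h : (j : ℕ) < ((Fin.last (n+1) : Fin (n+2)) : ℕ) := j.isLt
  simp only [delS, if_pos h, Fin.snoc_castSucc, Fin.snoc_last, hidem, hinv]

lemma key (hidem : ∀ x : X, op x x = x)
    (hinv : ∀ x b : X, op (op x b) b = x)
    (hdist : ∀ a b c : X, op (op a b) c = op (op a c) (op b c))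
    (x : Fin (n + 1) → X) :
    bdryGen op (Fin.snoc x a : Fin (n + 2) → X)
      + bdryGen op (fun j => op ((Fin.snoc x a : Fin (n + 2) → X) j) a)
    = (hmap a n + (starMap op a (n + 1)) ∘ₗ hmap a n) (bdryGen op x) := by
  have Hsingle : ∀ w : Fin n → X,
      (hmap a n + (starMap op a (n + 1)) ∘ₗ hmap a n) (Finsupp.single w 1)
        = Finsupp.single (Fin.snoc w a : Fin (n + 1) → X) 1
          + Finsupp.single (fun j => op ((Fin.snoc w a : Fin (n + 1) → X) j) a) 1 := by
    intro w
    simp [hmap, starMap, Finsupp.lsum_single, LinearMap.toSpanSingleton_apply]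
  simp only [bdryGen]
  rw [map_sum]
  conv_lhs => enter [1]; rw [Fin.sum_univ_castSucc]
  conv_lhs => enter [2]; rw [Fin.sum_univ_castSucc]
  have eA : delF (Fin.last (n + 1)) (Fin.snoc x a) = x := delF_last_snoc a x
  have eB : delS op (Fin.last (n + 1)) (Fin.snoc x a) = fun j => op (x j) a :=
    delS_last_snoc op a x
  have eC : delF (Fin.last (n + 1)) (fun j => op ((Fin.snoc x a : Fin (n + 2) → X) j) a)
      = fun j => op (x j) a := by
    rw [delF_star, eA]
  have eD : delS op (Fin.last (n + 1)) (fun j => op ((Fin.snoc x a : Fin (n + 2) → X) j) a)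
      = x := delS_last_star op a hidem hinv x
  rw [eC, eD, eA, eB]
  simp only [Fin.val_last]
  rw [if_neg (Nat.succ_ne_zero n), if_neg (Nat.succ_ne_zero n)]
  rw [add_add_add_comm, ← smul_add, sub_add_sub_cancel, sub_self, smul_zero, add_zero,
    ← Finset.sum_add_distrib]
  refine Finset.sum_congr rfl ?_
  intro i _
  simp only [Fin.coe_castSucc]
  by_cases h0 : (i : ℕ) = 0
  · rw [if_pos h0, if_pos h0, if_pos h0, add_zero, map_zero]
  · have e1 : delF i.castSucc (fun j => op ((Fin.snoc x a : Fin (n + 2) → X) j) a)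
        = fun j => op ((Fin.snoc (delF i x) a : Fin (n + 1) → X) j) a := by
      rw [delF_star, delF_snoc]
    have e2 : delS op i.castSucc (fun j => op ((Fin.snoc x a : Fin (n + 2) → X) j) a)
        = fun j => op ((Fin.snoc (delS op i x) a : Fin (n + 1) → X) j) a := by
      rw [delS_star op a hdist, delS_snoc]
    rw [if_neg h0, if_neg h0, if_neg h0, map_smul, map_sub, Hsingle, Hsingle,
      delF_snoc, delS_snoc, e1, e2, ← smul_add]
    congr 1
    abel

end aux

/-- For a kei `X` and `a ∈ X`, the map `h'_a = h_a + *_a ∘ h_a` is a chain map. -/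
theorem hprime_chain_map {X : Type*} (op : X → X → X)
    (hidem : ∀ x : X, op x x = x)
    (hinv : ∀ x b : X, op (op x b) b = x)
    (hdist : ∀ a b c : X, op (op a b) c = op (op a c) (op b c)) (a : X) (n : ℕ) :
    (bdry op (n + 1)) ∘ₗ
        (hmap a (n + 1) + (starMap op a (n + 2)) ∘ₗ hmap a (n + 1)) =
      (hmap a n + (starMap op a (n + 1)) ∘ₗ hmap a n) ∘ₗ (bdry op n) := by
  apply Finsupp.lhom_ext
  intro w b
  have hb : (Finsupp.single w b) = b • Finsupp.single w (1 : ℤ) := by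
    rw [Finsupp.smul_single, smul_eq_mul, mul_one]
  rw [LinearMap.comp_apply, LinearMap.comp_apply, hb, map_smul, map_smul, map_smul, map_smul]
  congr 1
  have h1 : (hmap a (n + 1) + (starMap op a (n + 2)) ∘ₗ hmap a (n + 1))
        (Finsupp.single w 1)
      = Finsupp.single (Fin.snoc w a : Fin (n + 2) → X) 1
        + Finsupp.single (fun j => op ((Fin.snoc w a : Fin (n + 2) → X) j) a) 1 := by
    simp [hmap, starMap, Finsupp.lsum_single, LinearMap.toSpanSingleton_apply]
  have h2 : bdry op n (Finsupp.single w 1) = bdryGen op w := by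
    simp [bdry, Finsupp.lsum_single, LinearMap.toSpanSingleton_apply]
  have h3 : ∀ z : Fin (n + 2) → X, bdry op (n + 1) (Finsupp.single z 1) = bdryGen op z := by
    intro z
    simp [bdry, Finsupp.lsum_single, LinearMap.toSpanSingleton_apply]
  rw [h1, h2, map_add, h3, h3]
  exact key op a hidem hinv hdist w
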